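/- The explicit matrices X* and Z* for the graph G₆ satisfy rank(X*) = 4 and rank(Z*) = 3; in particular rank(X*) + rank(Z*) = 7, so the pair (X*, Z*) satisfies strict complementarity for the 7×7 Lovász theta SDP of G₆. -/
import Mathlib


/-- The explicit primal optimal solution `X*` of the Lovász theta SDP of `G₆`, with
`f = 1/√5`, `h = 1/(2√5)`, `k = (5 - √5)/10` and `r = (5 - √5)/20`. -/
noncomputable def g6Xstar : Matrix (Fin 7) (Fin 7) ℝ :=
  let f : ℝ := 1 / Real.sqrt 5
  let h : ℝ := 1 / (2 * Real.sqrt 5)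
  let k : ℝ := (5 - Real.sqrt 5) / 10
  let r : ℝ := (5 - Real.sqrt 5) / 20
  !![1, f, f, f, h, f, h;
     f, f, k, 0, 0, k, 0;
     f, k, f, k, 0, 0, 0;
     f, 0, k, f, r, 0, r;
     h, 0, 0, r, h, r, 0;
     f, k, 0, 0, r, f, r;
     h, 0, 0, r, 0, r, h]

/-- The explicit dual optimal solution `Z*` of the Lovász theta SDP of `G₆`, with
`c = (√5 - 1)/2`. -/
noncomputable def g6Zstar : Matrix (Fin 7) (Fin 7) ℝ :=
  let c : ℝ := (Real.sqrt 5 - 1) / 2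
  !![Real.sqrt 5, -1, -1, -1, -1, -1, -1;
     -1, 1, 0, c, c, 0, c;
     -1, 0, 1, 0, c, c, c;
     -1, c, 0, 1, 0, c, 0;
     -1, c, c, 0, 1, 0, 1;
     -1, 0, c, c, 0, 1, 0;
     -1, c, c, 0, 1, 0, 1]

set_option maxHeartbeats 1000000

@[simp] private lemma g6_cons_val_five {m : ℕ} {α : Type*} (x : α)
    (u : Fin m.succ.succ.succ.succ.succ → α) :
    Matrix.vecCons x u 5 =
      Matrix.vecHead (Matrix.vecTail (Matrix.vecTail (Matrix.vecTail (Matrix.vecTail u)))) := rfl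

@[simp] private lemma g6_cons_val_six {m : ℕ} {α : Type*} (x : α)
    (u : Fin m.succ.succ.succ.succ.succ.succ → α) :
    Matrix.vecCons x u 6 =
      Matrix.vecHead (Matrix.vecTail (Matrix.vecTail (Matrix.vecTail (Matrix.vecTail (Matrix.vecTail u))))) := rfl

noncomputable section G6Aux

private def Xlit (s : ℝ) : Matrix (Fin 7) (Fin 7) ℝ :=
  !![1, s/5, s/5, s/5, s/10, s/5, s/10;
     s/5, s/5, (5 - s)/10, 0, 0, (5 - s)/10, 0;
     s/5, (5 - s)/10, s/5, (5 - s)/10, 0, 0, 0;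
     s/5, 0, (5 - s)/10, s/5, (5 - s)/20, 0, (5 - s)/20;
     s/10, 0, 0, (5 - s)/20, s/10, (5 - s)/20, 0;
     s/5, (5 - s)/10, 0, 0, (5 - s)/20, s/5, (5 - s)/20;
     s/10, 0, 0, (5 - s)/20, 0, (5 - s)/20, s/10]

private def Zlit (s : ℝ) : Matrix (Fin 7) (Fin 7) ℝ :=
  !![s, -1, -1, -1, -1, -1, -1;
     -1, 1, 0, (s - 1)/2, (s - 1)/2, 0, (s - 1)/2;
     -1, 0, 1, 0, (s - 1)/2, (s - 1)/2, (s - 1)/2;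
     -1, (s - 1)/2, 0, 1, 0, (s - 1)/2, 0;
     -1, (s - 1)/2, (s - 1)/2, 0, 1, 0, 1;
     -1, 0, (s - 1)/2, (s - 1)/2, 0, 1, 0;
     -1, (s - 1)/2, (s - 1)/2, 0, 1, 0, 1]

private def XA (s : ℝ) : Matrix (Fin 7) (Fin 4) ℝ :=
  !![1, (1/5)*s, (1/5)*s, (1/10)*s;
     (1/5)*s, (1/5)*s, ((1/2) + (-1/10)*s), 0;
     (1/5)*s, ((1/2) + (-1/10)*s), (1/5)*s, 0;
     (1/5)*s, 0, ((1/2) + (-1/10)*s), ((1/4) + (-1/20)*s);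
     (1/10)*s, 0, 0, (1/10)*s;
     (1/5)*s, ((1/2) + (-1/10)*s), 0, ((1/4) + (-1/20)*s);
     (1/10)*s, 0, 0, 0]

private def XB (s : ℝ) : Matrix (Fin 4) (Fin 7) ℝ :=
  !![1, 0, 0, ((-1/2) + (1/2)*s), 0, ((-1/2) + (1/2)*s), 1;
     0, 1, 0, (-1), 0, ((-1/2) + (1/2)*s), ((1/2) + (-1/2)*s);
     0, 0, 1, ((-1/2) + (1/2)*s), 0, (-1), ((1/2) + (-1/2)*s);
     0, 0, 0, 0, 1, 0, (-1)]

private def XC (s : ℝ) : Matrix (Fin 7) (Fin 4) ℝ :=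
  !![2*s, ((-5) + s), ((-5) + s), (-2)*s;
     ((-5) + s), ((-5/2) + (7/2)*s), ((-5) + 2*s), (5 + (-s));
     ((-5) + s), ((-5) + 2*s), ((-5/2) + (7/2)*s), (5 + (-s));
     0, 0, 0, 0;
     (-2)*s, (5 + (-s)), (5 + (-s)), 4*s;
     0, 0, 0, 0;
     0, 0, 0, 0]

private def XS : Matrix (Fin 4) (Fin 7) ℝ :=
  !![1, 0, 0, 0, 0, 0, 0;
     0, 1, 0, 0, 0, 0, 0;
     0, 0, 1, 0, 0, 0, 0;
     0, 0, 0, 0, 1, 0, 0]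

private def ZA (s : ℝ) : Matrix (Fin 7) (Fin 3) ℝ :=
  !![s, (-1), (-1);
     (-1), 1, 0;
     (-1), 0, 1;
     (-1), ((-1/2) + (1/2)*s), 0;
     (-1), ((-1/2) + (1/2)*s), ((-1/2) + (1/2)*s);
     (-1), 0, ((-1/2) + (1/2)*s);
     (-1), ((-1/2) + (1/2)*s), ((-1/2) + (1/2)*s)]

private def ZB (s : ℝ) : Matrix (Fin 3) (Fin 7) ℝ :=
  !![1, 0, 0, ((-1/2) + (-1/2)*s), 1, ((-1/2) + (-1/2)*s), 1;
     0, 1, 0, (-1), ((1/2) + (1/2)*s), ((-1/2) + (-1/2)*s), ((1/2) + (1/2)*s);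
     0, 0, 1, ((-1/2) + (-1/2)*s), ((1/2) + (1/2)*s), (-1), ((1/2) + (1/2)*s)]

private def ZC (s : ℝ) : Matrix (Fin 7) (Fin 3) ℝ :=
  !![(2 + s), (2 + s), (2 + s);
     (2 + s), (3 + s), (2 + s);
     (2 + s), (2 + s), (3 + s);
     0, 0, 0;
     0, 0, 0;
     0, 0, 0;
     0, 0, 0]

private def ZS : Matrix (Fin 3) (Fin 7) ℝ :=
  !![1, 0, 0, 0, 0, 0, 0;
     0, 1, 0, 0, 0, 0, 0;
     0, 0, 1, 0, 0, 0, 0]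

end G6Aux

private lemma Xfac {s : ℝ} (hs : s * s = 5) : Xlit s = XA s * XB s := by
  have hs3 : s * s * s = 5 * s := by rw [hs]
  ext i j
  fin_cases i <;> fin_cases j <;>
    simp [Xlit, XA, XB, Matrix.mul_apply, Fin.sum_univ_succ, Matrix.vecHead, Matrix.vecTail] <;>
    ring_nf <;> nlinarith [hs, hs3]

private lemma Xinv {s : ℝ} (hs : s * s = 5) : XS * Xlit s * XC s = 1 := by
  have hs3 : s * s * s = 5 * s := by rw [hs]
  ext i j
  fin_cases i <;> fin_cases j <;>
    simp [Xlit, XS, XC, Matrix.mul_apply, Fin.sum_univ_succ, Matrix.one_apply] <;>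
    ring_nf <;> nlinarith [hs, hs3]

private lemma Zfac {s : ℝ} (hs : s * s = 5) : Zlit s = ZA s * ZB s := by
  have hs3 : s * s * s = 5 * s := by rw [hs]
  ext i j
  fin_cases i <;> fin_cases j <;>
    simp [Zlit, ZA, ZB, Matrix.mul_apply, Fin.sum_univ_succ, Matrix.vecHead, Matrix.vecTail] <;>
    ring_nf <;> nlinarith [hs, hs3]

private lemma Zinv {s : ℝ} (hs : s * s = 5) : ZS * Zlit s * ZC s = 1 := by
  have hs3 : s * s * s = 5 * s := by rw [hs]
  ext i j
  fin_cases i <;> fin_cases j <;>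
    simp [Zlit, ZS, ZC, Matrix.mul_apply, Fin.sum_univ_succ, Matrix.one_apply] <;>
    ring_nf <;> nlinarith [hs, hs3]

private lemma rank_eq_of_fac_inv {n k : ℕ} (M : Matrix (Fin n) (Fin n) ℝ)
    (A : Matrix (Fin n) (Fin k) ℝ) (B : Matrix (Fin k) (Fin n) ℝ)
    (S : Matrix (Fin k) (Fin n) ℝ) (C : Matrix (Fin n) (Fin k) ℝ)
    (hfac : M = A * B) (hinv : S * M * C = 1) : M.rank = k := by
  refine le_antisymm ?_ ?_
  · calc M.rank = (A * B).rank := by rw [hfac]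
      _ ≤ A.rank := Matrix.rank_mul_le_left A B
      _ ≤ k := Matrix.rank_le_width A
  · calc k = (1 : Matrix (Fin k) (Fin k) ℝ).rank := by
          rw [Matrix.rank_one, Fintype.card_fin]
      _ = (S * M * C).rank := by rw [hinv]
      _ ≤ (S * M).rank := Matrix.rank_mul_le_left _ _
      _ ≤ M.rank := Matrix.rank_mul_le_right _ _

private lemma g6Xstar_eq : g6Xstar = Xlit (Real.sqrt 5) := by
  have h5 : (0:ℝ) < Real.sqrt 5 := Real.sqrt_pos.mpr (by norm_num)
  have hs : Real.sqrt 5 * Real.sqrt 5 = 5 := Real.mul_self_sqrt (by norm_num)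
  have h1 : (1:ℝ) / Real.sqrt 5 = Real.sqrt 5 / 5 := by
    rw [div_eq_div_iff (ne_of_gt h5) (by norm_num)]; nlinarith [hs]
  have h2 : (1:ℝ) / (2 * Real.sqrt 5) = Real.sqrt 5 / 10 := by
    rw [div_eq_div_iff (by positivity) (by norm_num)]; nlinarith [hs]
  show (let f : ℝ := 1 / Real.sqrt 5
        let h : ℝ := 1 / (2 * Real.sqrt 5)
        let k : ℝ := (5 - Real.sqrt 5) / 10
        let r : ℝ := (5 - Real.sqrt 5) / 20
        !![1, f, f, f, h, f, h;
           f, f, k, 0, 0, k, 0;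
           f, k, f, k, 0, 0, 0;
           f, 0, k, f, r, 0, r;
           h, 0, 0, r, h, r, 0;
           f, k, 0, 0, r, f, r;
           h, 0, 0, r, 0, r, h]) = Xlit (Real.sqrt 5)
  simp only [Xlit]
  rw [h1, h2]

private lemma g6Zstar_eq : g6Zstar = Zlit (Real.sqrt 5) := rfl

/-- `rank X* = 4` and `rank Z* = 3`; in particular `rank X* + rank Z* = 7`, so the pair
`(X*, Z*)` satisfies strict complementarity for the `7 × 7` Lovász theta SDP of `G₆`. -/

theorem g6_strict_complementarity :
    g6Xstar.rank = 4 ∧ g6Zstar.rank = 3 ∧ g6Xstar.rank + g6Zstar.rank = 7 := by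
  have hs : Real.sqrt 5 * Real.sqrt 5 = 5 := Real.mul_self_sqrt (by norm_num)
  have hX : g6Xstar.rank = 4 := by
    rw [g6Xstar_eq]
    exact rank_eq_of_fac_inv _ _ _ _ _ (Xfac hs) (Xinv hs)
  have hZ : g6Zstar.rank = 3 := by
    rw [g6Zstar_eq]
    exact rank_eq_of_fac_inv _ _ _ _ _ (Zfac hs) (Zinv hs)
  exact ⟨hX, hZ, by rw [hX, hZ]⟩
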